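/- Let A be an n×n Hermitian complex matrix with eigenvalues λ₁(A) ≥ ... ≥ λₙ(A), and let B be the principal (n-1)×(n-1) submatrix obtained by deleting the last row and column, with eigenvalues μ₁ ≥ ... ≥ μ_{n-1}. Then for every k with 1 ≤ k ≤ n-1, λ_{k+1}(A) ≤ μₖ ≤ λₖ(A). -/

import Mathlib

open scoped InnerProductSpace
open Finset

/-- Lower bound for the Rayleigh quotient on a span of eigenvectors. -/
lemma interlace_quad_ge {E : Type*} [NormedAddCommGroup E] [InnerProductSpace ℂ E]
    {ι : Type*} [Fintype ι] {v : ι → E} (hv : Orthonormal ℂ v)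
    (T : E →ₗ[ℂ] E) (e : ι → ℝ) (hT : ∀ i, T (v i) = (e i : ℂ) • v i)
    (s : Finset ι) (c : ℝ) (hc : ∀ i ∈ s, c ≤ e i)
    {x : E} (hx : x ∈ Submodule.span ℂ (v '' (s : Set ι))) :
    c * ‖x‖ ^ 2 ≤ RCLike.re (⟪x, T x⟫_ℂ) := by
  classical
  have hvs : Orthonormal ℂ (fun i : (s : Set ι) => v ↑i) := hv.comp _ Subtype.val_injective
  rw [Set.image_eq_range v (s : Set ι)] at hx
  obtain ⟨l, hl⟩ := (Submodule.mem_span_range_iff_exists_fun ℂ).mp hx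
  have hTx : T x = ∑ i : (s : Set ι), (fun i : (s : Set ι) => l i * (e (i : ι) : ℂ)) i • v ↑i := by
    rw [← hl, map_sum]
    refine Finset.sum_congr rfl fun i _ => ?_
    rw [map_smul, hT, smul_smul]
  have hinner := hvs.inner_sum l (fun i => l i * (e (i : ι) : ℂ)) Finset.univ
  rw [hl, ← hTx] at hinner
  have hself := hvs.inner_sum l l Finset.univ
  rw [hl] at hself
  have hnorm : ‖x‖ ^ 2 = ∑ i : (s : Set ι), Complex.normSq (l i) := by
    rw [← inner_self_eq_norm_sq (𝕜 := ℂ), hself]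
    rw [map_sum]
    refine Finset.sum_congr rfl fun i _ => ?_
    simp [Complex.normSq_eq_conj_mul_self, RCLike.re_to_complex, Complex.normSq_apply, Complex.mul_re]
  have hre : RCLike.re (⟪x, T x⟫_ℂ) = ∑ i : (s : Set ι), Complex.normSq (l i) * e (i : ι) := by
    rw [hinner, map_sum]
    refine Finset.sum_congr rfl fun i _ => ?_
    have : (starRingEnd ℂ) (l i) * (l i * (e (i : ι) : ℂ))
        = ((Complex.normSq (l i) * e (i : ι) : ℝ) : ℂ) := by
      rw [← mul_assoc, ← Complex.normSq_eq_conj_mul_self]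
      push_cast
      ring
    rw [this]
    simp [RCLike.re_to_complex]
  rw [hre, hnorm, Finset.mul_sum]
  refine Finset.sum_le_sum fun i _ => ?_
  rw [mul_comm c _]
  exact mul_le_mul_of_nonneg_left (hc i (Finset.mem_coe.mp i.2)) (Complex.normSq_nonneg _)

/-- Upper bound for the Rayleigh quotient on a span of eigenvectors. -/
lemma interlace_quad_le {E : Type*} [NormedAddCommGroup E] [InnerProductSpace ℂ E]
    {ι : Type*} [Fintype ι] {v : ι → E} (hv : Orthonormal ℂ v)
    (T : E →ₗ[ℂ] E) (e : ι → ℝ) (hT : ∀ i, T (v i) = (e i : ℂ) • v i)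
    (s : Finset ι) (c : ℝ) (hc : ∀ i ∈ s, e i ≤ c)
    {x : E} (hx : x ∈ Submodule.span ℂ (v '' (s : Set ι))) :
    RCLike.re (⟪x, T x⟫_ℂ) ≤ c * ‖x‖ ^ 2 := by
  have h := interlace_quad_ge hv (-T) (fun i => -(e i))
    (fun i => by push_cast; rw [LinearMap.neg_apply, hT, neg_smul]) s (-c)
    (fun i hi => neg_le_neg (hc i hi)) hx
  rw [LinearMap.neg_apply, inner_neg_right, map_neg] at h
  linarith

/-- Extension of a vector by a zero last coordinate, as a linear map between
Euclidean spaces. -/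
noncomputable def extMap (n : ℕ) :
    EuclideanSpace ℂ (Fin n) →ₗ[ℂ] EuclideanSpace ℂ (Fin (n + 1)) where
  toFun y := (WithLp.equiv 2 (Fin (n + 1) → ℂ)).symm
    (Fin.snoc ((WithLp.equiv 2 (Fin n → ℂ)) y) 0)
  map_add' y z := by
    ext i
    refine Fin.lastCases ?_ (fun j => ?_) i <;>
      simp [PiLp.toLp_apply, WithLp.equiv_apply, Fin.snoc_last, Fin.snoc_castSucc,
        PiLp.add_apply]
  map_smul' c y := by
    ext i
    refine Fin.lastCases ?_ (fun j => ?_) i <;>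
      simp [PiLp.toLp_apply, WithLp.equiv_apply, Fin.snoc_last, Fin.snoc_castSucc,
        PiLp.smul_apply]

lemma extMap_apply_castSucc {n : ℕ} (y : EuclideanSpace ℂ (Fin n)) (j : Fin n) :
    extMap n y j.castSucc = y j := by
  simp [extMap, PiLp.toLp_apply, WithLp.equiv_apply, Fin.snoc_castSucc]

lemma extMap_apply_last {n : ℕ} (y : EuclideanSpace ℂ (Fin n)) :
    extMap n y (Fin.last n) = 0 := by
  simp [extMap, PiLp.toLp_apply, Fin.snoc_last]

lemma extMap_inner {n : ℕ} (y z : EuclideanSpace ℂ (Fin n)) :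
    ⟪extMap n y, extMap n z⟫_ℂ = ⟪y, z⟫_ℂ := by
  simp only [PiLp.inner_apply, RCLike.inner_apply]
  rw [Fin.sum_univ_castSucc]
  simp [extMap_apply_castSucc, extMap_apply_last]

lemma extMap_compress {n : ℕ} (A : Matrix (Fin (n + 1)) (Fin (n + 1)) ℂ)
    (y z : EuclideanSpace ℂ (Fin n)) :
    ⟪extMap n y, Matrix.toEuclideanLin A (extMap n z)⟫_ℂ
      = ⟪y, Matrix.toEuclideanLin (A.submatrix Fin.castSucc Fin.castSucc) z⟫_ℂ := by
  simp only [PiLp.inner_apply, RCLike.inner_apply, Matrix.toEuclideanLin_apply,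
    PiLp.toLp_apply]
  rw [Fin.sum_univ_castSucc]
  have hlast : A.mulVec (extMap n z).ofLp (Fin.last n) *
      (starRingEnd ℂ) (extMap n y (Fin.last n)) = 0 := by
    rw [extMap_apply_last]; simp
  rw [hlast, add_zero]
  refine Finset.sum_congr rfl fun i _ => ?_
  rw [extMap_apply_castSucc]
  congr 1
  simp only [Matrix.mulVec, dotProduct, WithLp.equiv_apply]
  rw [Fin.sum_univ_castSucc]
  have : A i.castSucc (Fin.last n) * extMap n z (Fin.last n) = 0 := by
    rw [extMap_apply_last]; simp
  rw [this, add_zero]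
  refine Finset.sum_congr rfl fun j _ => ?_
  rw [extMap_apply_castSucc]
  simp [Matrix.submatrix_apply]

theorem stmt_4 {n : ℕ} (A : Matrix (Fin (n+1)) (Fin (n+1)) ℂ) (hA : A.IsHermitian)
    (B : Matrix (Fin n) (Fin n) ℂ)
    (hBdef : B = A.submatrix Fin.castSucc Fin.castSucc) (hB : B.IsHermitian)
    (lamA : Fin (n+1) → ℝ) (hlamA : Antitone lamA)
    (henumA : ∃ σ : Equiv.Perm (Fin (n+1)), ∀ i, lamA i = hA.eigenvalues (σ i))
    (mu : Fin n → ℝ) (hmu : Antitone mu)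
    (henumB : ∃ σ : Equiv.Perm (Fin n), ∀ i, mu i = hB.eigenvalues (σ i)) :
    ∀ k : Fin n, lamA k.succ ≤ mu k ∧ mu k ≤ lamA k.castSucc := by
  classical
  obtain ⟨σ, hσ⟩ := henumA
  obtain ⟨τ, hτ⟩ := henumB
  set TA := Matrix.toEuclideanLin A with hTA
  set TB := Matrix.toEuclideanLin B with hTB
  set v : Fin (n+1) → EuclideanSpace ℂ (Fin (n+1)) := fun i => hA.eigenvectorBasis (σ i) with hvdef
  set w : Fin n → EuclideanSpace ℂ (Fin n) := fun i => hB.eigenvectorBasis (τ i) with hwdef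
  have hv : Orthonormal ℂ v := hA.eigenvectorBasis.orthonormal.comp _ σ.injective
  have hw : Orthonormal ℂ w := hB.eigenvectorBasis.orthonormal.comp _ τ.injective
  have hTv : ∀ i, TA (v i) = (lamA i : ℂ) • v i := by
    intro i
    have hveq : v i = (WithLp.equiv 2 (Fin (n+1) → ℂ)).symm ⇑(hA.eigenvectorBasis (σ i)) := rfl
    rw [hveq, hTA, WithLp.equiv_symm_apply, Matrix.toEuclideanLin_apply_piLp_toLp, hA.mulVec_eigenvectorBasis, hσ]
    ext j
    simp [PiLp.toLp_apply, Complex.real_smul]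
  have hTw : ∀ i, TB (w i) = (mu i : ℂ) • w i := by
    intro i
    have hweq : w i = (WithLp.equiv 2 (Fin n → ℂ)).symm ⇑(hB.eigenvectorBasis (τ i)) := rfl
    rw [hweq, hTB, WithLp.equiv_symm_apply, Matrix.toEuclideanLin_apply_piLp_toLp, hB.mulVec_eigenvectorBasis, hτ]
    ext j
    simp [PiLp.toLp_apply, Complex.real_smul]
  set u : Fin n → EuclideanSpace ℂ (Fin (n+1)) := fun i => extMap n (w i) with hudef
  have hu : Orthonormal ℂ u := by
    rw [orthonormal_iff_ite] at hw ⊢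
    intro i j
    rw [hudef]
    simp only []
    rw [extMap_inner]
    exact hw i j
  -- generic machinery for one inequality
  have main : ∀ (s : Finset (Fin (n+1))) (t : Finset (Fin n)),
      n + 2 ≤ s.card + t.card →
      ∃ (x : EuclideanSpace ℂ (Fin (n+1))) (y : EuclideanSpace ℂ (Fin n)),
        x ≠ 0 ∧ extMap n y = x ∧
        x ∈ Submodule.span ℂ (v '' (s : Set (Fin (n+1)))) ∧
        y ∈ Submodule.span ℂ (w '' (t : Set (Fin n))) := by
    intro s t hcard
    set V := Submodule.span ℂ (v '' (s : Set (Fin (n+1)))) with hV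
    set W := Submodule.span ℂ (u '' (t : Set (Fin n))) with hW
    have hVrank : Module.finrank ℂ V = s.card := by
      have hli : LinearIndependent ℂ (fun i : (s : Set (Fin (n+1))) => v ↑i) :=
        (hv.comp _ Subtype.val_injective).linearIndependent
      have hVeq : V = Submodule.span ℂ (Set.range fun i : (s : Set (Fin (n+1))) => v ↑i) := by
        rw [hV, Set.image_eq_range]
      rw [hVeq, finrank_span_eq_card hli]
      simp
    have hWrank : Module.finrank ℂ W = t.card := by
      have hli : LinearIndependent ℂ (fun i : (t : Set (Fin n)) => u ↑i) :=
        (hu.comp _ Subtype.val_injective).linearIndependent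
      have hWeq : W = Submodule.span ℂ (Set.range fun i : (t : Set (Fin n)) => u ↑i) := by
        rw [hW, Set.image_eq_range]
      rw [hWeq, finrank_span_eq_card hli]
      simp
    have hsup : Module.finrank ℂ ↥(V ⊔ W) ≤ n + 1 := by
      have := Submodule.finrank_le (V ⊔ W)
      rwa [finrank_euclideanSpace_fin] at this
    have hinf : 0 < Module.finrank ℂ ↥(V ⊓ W) := by
      have h := Submodule.finrank_sup_add_finrank_inf_eq V W
      omega
    obtain ⟨x, hx0⟩ := Module.finrank_pos_iff_exists_ne_zero.mp hinf
    have hxV : (x : EuclideanSpace ℂ (Fin (n+1))) ∈ V := x.2.1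
    have hxW : (x : EuclideanSpace ℂ (Fin (n+1))) ∈ W := x.2.2
    have himg : u '' (t : Set (Fin n)) = extMap n '' (w '' (t : Set (Fin n))) := by
      rw [Set.image_image]
    have hxW' : (↑x : EuclideanSpace ℂ (Fin (n+1))) ∈
        Submodule.map (extMap n) (Submodule.span ℂ (w '' (t : Set (Fin n)))) := by
      rw [Submodule.map_span, ← himg]
      exact hxW
    obtain ⟨y, hy, hyx⟩ := hxW' 
    refine ⟨x, y, ?_, hyx, hxV, hy⟩
    simpa using hx0
  intro k
  have hnorm_ext : ∀ z : EuclideanSpace ℂ (Fin n), ‖extMap n z‖ ^ 2 = ‖z‖ ^ 2 := by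
    intro z
    rw [← inner_self_eq_norm_sq (𝕜 := ℂ), ← inner_self_eq_norm_sq (𝕜 := ℂ), extMap_inner]
  constructor
  · -- lamA k.succ ≤ mu k, use s = Iic k.succ, t = Ici k
    obtain ⟨x, y, hx0, hyx, hxV, hyW⟩ := main (Finset.Iic k.succ) (Finset.Ici k) (by
      rw [Fin.card_Iic, Fin.card_Ici]
      have := k.2
      simp only [Fin.val_succ]
      omega)
    have h1 : lamA k.succ * ‖x‖ ^ 2 ≤ RCLike.re (⟪x, TA x⟫_ℂ) :=
      interlace_quad_ge hv TA lamA hTv _ _ (fun i hi => hlamA (Finset.mem_Iic.mp hi)) hxV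
    have h2 : RCLike.re (⟪y, TB y⟫_ℂ) ≤ mu k * ‖y‖ ^ 2 :=
      interlace_quad_le hw TB mu hTw _ _ (fun i hi => hmu (Finset.mem_Ici.mp hi)) hyW
    have hcomp : ⟪x, TA x⟫_ℂ = ⟪y, TB y⟫_ℂ := by
      rw [← hyx, hTA, hTB, hBdef, extMap_compress]
    have hxy : ‖x‖ ^ 2 = ‖y‖ ^ 2 := by rw [← hyx, hnorm_ext]
    have hpos : (0 : ℝ) < ‖x‖ ^ 2 := pow_pos (norm_pos_iff.mpr hx0) 2
    rw [hcomp] at h1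
    rw [← hxy] at h2
    exact le_of_mul_le_mul_right (le_trans h1 h2) hpos
  · -- mu k ≤ lamA k.castSucc, use s = Ici k.castSucc, t = Iic k
    obtain ⟨x, y, hx0, hyx, hxV, hyW⟩ := main (Finset.Ici k.castSucc) (Finset.Iic k) (by
      rw [Fin.card_Iic, Fin.card_Ici]
      have := k.2
      simp only [Fin.coe_castSucc]
      omega)
    have h1 : RCLike.re (⟪x, TA x⟫_ℂ) ≤ lamA k.castSucc * ‖x‖ ^ 2 :=
      interlace_quad_le hv TA lamA hTv _ _ (fun i hi => hlamA (Finset.mem_Ici.mp hi)) hxV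
    have h2 : mu k * ‖y‖ ^ 2 ≤ RCLike.re (⟪y, TB y⟫_ℂ) :=
      interlace_quad_ge hw TB mu hTw _ _ (fun i hi => hmu (Finset.mem_Iic.mp hi)) hyW
    have hcomp : ⟪x, TA x⟫_ℂ = ⟪y, TB y⟫_ℂ := by
      rw [← hyx, hTA, hTB, hBdef, extMap_compress]
    have hxy : ‖x‖ ^ 2 = ‖y‖ ^ 2 := by rw [← hyx, hnorm_ext]
    have hpos : (0 : ℝ) < ‖x‖ ^ 2 := pow_pos (norm_pos_iff.mpr hx0) 2
    rw [hcomp] at h1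
    rw [← hxy] at h2
    exact le_of_mul_le_mul_right (le_trans h2 h1) hpos
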